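/- Suppose a node N = (X,Y,<) is a complete bipartite poset with X = {x₀,…,x_{u−1}}, Y = {y₀,…,y_{u−1}}, and Z = {z₀,…,z_{u−1}} is an antichain with x_i < z_k < y_j for all i,j,k (both children (X,Z,<) and (Z,Y,<) are complete bipartite). Assign to each edge (x_i < y_j) of N a distinct color, and color edges (x_i < z_k) and (z_k < y_j) with the color of (x_i < y_j) whenever k = (i + j) mod u. Then: (a) every edge of (X,Z,<) and of (Z,Y,<) receives exactly one color, and (b) for every color γ, the set of endpoints of edges colored γ forms a chain. -/

import Mathlib

/-- Shuffling colors: `N = (X, Y, <)` is complete bipartite with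
`X = {x₀,…,x_{u−1}}`, `Y = {y₀,…,y_{u−1}}`, and `Z = {z₀,…,z_{u−1}}` is an
antichain with `x_i < z_k < y_j` for all `i, j, k`.  Edge `(x_i < y_j)` gets the
distinct color `(i, j)`; edges `(x_i < z_k)` and `(z_k < y_j)` inherit the color of
`(x_i < y_j)` whenever `k = (i + j) mod u`.  Then (a) every edge of `(X, Z, <)` and
`(Z, Y, <)` receives exactly one color, and (b) for every color the endpoints of
the edges with this color form a chain. -/
theorem stmt13 {α : Type*} [PartialOrder α] (u : ℕ) [NeZero u]
    (x y z : Fin u → α)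
    (hX : ∀ i j : Fin u, i ≠ j → ¬ x i ≤ x j)
    (hY : ∀ i j : Fin u, i ≠ j → ¬ y i ≤ y j)
    (hZ : ∀ i j : Fin u, i ≠ j → ¬ z i ≤ z j)
    (hxz : ∀ i k : Fin u, x i < z k)
    (hzy : ∀ k j : Fin u, z k < y j) :
    -- (a) each edge of (X,Z,<) and of (Z,Y,<) receives exactly one color
    (∀ i k : Fin u, ∃! γ : Fin u × Fin u, γ = (i, k - i)) ∧
    (∀ k j : Fin u, ∃! γ : Fin u × Fin u, γ = (k - j, j)) ∧
    -- (b) for every color γ the endpoints of all edges colored γ form a chain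
    (∀ γ : Fin u × Fin u, IsChain (· ≤ ·)
      ({p : α | ∃ i k : Fin u, (i, k - i) = γ ∧ (p = x i ∨ p = z k)} ∪
       {p : α | ∃ k j : Fin u, (k - j, j) = γ ∧ (p = z k ∨ p = y j)})) := by
  refine ⟨fun i k => ⟨(i, k - i), rfl, fun γ h => h⟩,
    fun k j => ⟨(k - j, j), rfl, fun γ h => h⟩, fun γ => ?_⟩
  intro p hp q hq hne
  have key : ∀ r, r ∈ ({p : α | ∃ i k : Fin u, (i, k - i) = γ ∧ (p = x i ∨ p = z k)} ∪
       {p : α | ∃ k j : Fin u, (k - j, j) = γ ∧ (p = z k ∨ p = y j)}) →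
       r = x γ.1 ∨ r = z (γ.1 + γ.2) ∨ r = y γ.2 := by
    rintro r (⟨i, k, hc, hr⟩ | ⟨k, j, hc, hr⟩)
    · obtain ⟨h1, h2⟩ := Prod.mk.injEq .. ▸ hc
      subst h1
      have hk : k = γ.1 + γ.2 := by rw [← h2]; abel
      subst hk
      rcases hr with h | h
      · exact Or.inl h
      · exact Or.inr (Or.inl h)
    · obtain ⟨h1, h2⟩ := Prod.mk.injEq .. ▸ hc
      subst h2
      have hk : k = γ.1 + γ.2 := by rw [← h1]; abel
      subst hk
      rcases hr with h | h
      · exact Or.inr (Or.inl h)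
      · exact Or.inr (Or.inr h)
  have h1 : x γ.1 ≤ z (γ.1 + γ.2) := (hxz _ _).le
  have h2 : z (γ.1 + γ.2) ≤ y γ.2 := (hzy _ _).le
  have h3 : x γ.1 ≤ y γ.2 := h1.trans h2
  rcases key p hp with hp' | hp' | hp' <;> rcases key q hq with hq' | hq' | hq' <;>
    subst hp' <;> subst hq' <;> first
      | exact absurd rfl hne
      | exact Or.inl (by assumption)
      | exact Or.inr (by assumption)
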